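/- In dimension d = 2, the kernel satisfies the antisymmetry Γ₁₁(y,x) = -Γ₁₁(x,y) for all (x,y) ≠ (0,0); consequently Σ_{z ≠ 0} Γ₁₁(z)³ = 0 whenever the sum converges absolutely. -/

import Mathlib

open MeasureTheory Real

/-- The lattice Green's function kernel `Γ_{αβ}(z)` on `ℤ^d`. -/
noncomputable def latticeGamma (d : ℕ) (α β : Fin d) (z : Fin d → ℤ) : ℝ :=
  -∫ l : Fin d → ℝ in Set.univ.pi fun _ : Fin d => Set.Icc (0 : ℝ) 1,
    (Real.sin (π * l α) * Real.sin (π * l β) *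
        Real.cos (2 * π * ((∑ γ, l γ * (z γ : ℝ)) - l α / 2 + l β / 2))) /
      ∑ γ, Real.sin (π * l γ) ^ 2

noncomputable def myBox : Set (Fin 2 → ℝ) := Set.univ.pi fun _ : Fin 2 => Set.Icc (0 : ℝ) 1

noncomputable def Ffun (x y : ℤ) (l : Fin 2 → ℝ) : ℝ :=
  Real.sin (π * l 0) ^ 2 * Real.cos (2 * π * (l 0 * x + l 1 * y)) /
    (Real.sin (π * l 0) ^ 2 + Real.sin (π * l 1) ^ 2)

noncomputable def Gfun (x y : ℤ) (l : Fin 2 → ℝ) : ℝ :=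
  Real.sin (π * l 1) ^ 2 * Real.cos (2 * π * (l 0 * x + l 1 * y)) /
    (Real.sin (π * l 0) ^ 2 + Real.sin (π * l 1) ^ 2)

lemma measurableSet_myBox : MeasurableSet myBox :=
  MeasurableSet.univ_pi fun _ => measurableSet_Icc

lemma volume_myBox : volume myBox = 1 := by
  rw [myBox, volume_pi_pi]
  simp [Real.volume_Icc]

lemma gamma_eq (x y : ℤ) : latticeGamma 2 0 0 ![x, y] = -∫ l in myBox, Ffun x y l := by
  unfold latticeGamma Ffun myBox
  congr 1
  apply integral_congr_ae
  filter_upwards with l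
  have h1 : (∑ γ : Fin 2, l γ * ((![x, y] : Fin 2 → ℤ) γ : ℝ)) = l 0 * x + l 1 * y := by
    simp [Fin.sum_univ_two]
  rw [h1, Fin.sum_univ_two]
  ring_nf

lemma measurable_Ffun (x y : ℤ) : Measurable (Ffun x y) := by
  unfold Ffun; fun_prop

lemma measurable_Gfun (x y : ℤ) : Measurable (Gfun x y) := by
  unfold Gfun; fun_prop

lemma abs_Ffun_le (x y : ℤ) (l : Fin 2 → ℝ) : |Ffun x y l| ≤ 1 := by
  unfold Ffun
  rw [abs_div, abs_mul]
  have h0 : (0:ℝ) ≤ Real.sin (π * l 0) ^ 2 := sq_nonneg _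
  have h1 : (0:ℝ) ≤ Real.sin (π * l 1) ^ 2 := sq_nonneg _
  have hc : |Real.cos (2 * π * (l 0 * x + l 1 * y))| ≤ 1 := Real.abs_cos_le_one _
  rw [abs_of_nonneg (add_nonneg h0 h1), abs_of_nonneg h0]
  apply div_le_one_of_le₀
  · calc Real.sin (π * l 0) ^ 2 * |Real.cos (2 * π * (l 0 * x + l 1 * y))|
        ≤ Real.sin (π * l 0) ^ 2 * 1 := by exact mul_le_mul_of_nonneg_left hc h0
    _ ≤ _ := by nlinarith
  · positivity

lemma abs_Gfun_le (x y : ℤ) (l : Fin 2 → ℝ) : |Gfun x y l| ≤ 1 := by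
  unfold Gfun
  rw [abs_div, abs_mul]
  have h0 : (0:ℝ) ≤ Real.sin (π * l 0) ^ 2 := sq_nonneg _
  have h1 : (0:ℝ) ≤ Real.sin (π * l 1) ^ 2 := sq_nonneg _
  have hc : |Real.cos (2 * π * (l 0 * x + l 1 * y))| ≤ 1 := Real.abs_cos_le_one _
  rw [abs_of_nonneg (add_nonneg h0 h1), abs_of_nonneg h1]
  apply div_le_one_of_le₀
  · calc Real.sin (π * l 1) ^ 2 * |Real.cos (2 * π * (l 0 * x + l 1 * y))|
        ≤ Real.sin (π * l 1) ^ 2 * 1 := by exact mul_le_mul_of_nonneg_left hc h1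
    _ ≤ _ := by nlinarith
  · positivity

lemma integrableOn_of_bounded {f : (Fin 2 → ℝ) → ℝ} (hm : Measurable f)
    (hb : ∀ l, |f l| ≤ 1) : IntegrableOn f myBox := by
  apply Integrable.mono' (g := fun _ => (1:ℝ))
  · refine integrableOn_const (ne_of_lt ?_) (by simp)
    rw [volume_myBox]; exact ENNReal.one_lt_top
  · exact hm.aestronglyMeasurable
  · exact ae_of_all _ hb

noncomputable def swapEquiv : (Fin 2 → ℝ) ≃ᵐ (Fin 2 → ℝ) :=
  MeasurableEquiv.piCongrLeft (fun _ => ℝ) (Equiv.swap 0 1)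

lemma swapEquiv_apply (l : Fin 2 → ℝ) (i : Fin 2) :
    swapEquiv l i = l (Equiv.swap 0 1 i) := by
  have : swapEquiv l (Equiv.swap (0:Fin 2) 1 (Equiv.swap 0 1 i)) = l (Equiv.swap 0 1 i) := by
    rw [swapEquiv, MeasurableEquiv.coe_piCongrLeft]
    exact Equiv.piCongrLeft_apply_apply _ _ _ _
  simpa [Equiv.swap_apply_self] using this

lemma mySwapIntegral (x y : ℤ) :
    ∫ l in myBox, Ffun y x l = ∫ l in myBox, Gfun x y l := by
  have hmp : MeasurePreserving swapEquiv volume volume :=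
    volume_measurePreserving_piCongrLeft (fun _ => ℝ) (Equiv.swap 0 1)
  have hpre : swapEquiv ⁻¹' myBox = myBox := by
    ext l
    simp only [Set.mem_preimage, myBox, Set.mem_pi, Set.mem_univ, forall_true_left]
    constructor
    · intro h i
      have := h (Equiv.swap 0 1 i)
      rwa [swapEquiv_apply, Equiv.swap_apply_self] at this
    · intro h i
      rw [swapEquiv_apply]; exact h _
  have key := hmp.setIntegral_preimage_emb swapEquiv.measurableEmbedding
    (Ffun y x) myBox
  rw [hpre] at key
  rw [← key]
  apply integral_congr_ae
  filter_upwards with l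
  unfold Ffun Gfun
  have h0 : swapEquiv l 0 = l 1 := by rw [swapEquiv_apply]; simp
  have h1 : swapEquiv l 1 = l 0 := by rw [swapEquiv_apply]; simp
  rw [h0, h1]
  ring_nf

lemma bad_null : volume {l : Fin 2 → ℝ | l ∈ myBox ∧ Real.sin (π * l 0) ^ 2 + Real.sin (π * l 1) ^ 2 = 0} = 0 := by
  have hsub : {l : Fin 2 → ℝ | l ∈ myBox ∧ Real.sin (π * l 0) ^ 2 + Real.sin (π * l 1) ^ 2 = 0}
      ⊆ Set.univ.pi (fun i : Fin 2 => if i = 0 then ({0, 1} : Set ℝ) else Set.Icc (0:ℝ) 1) := by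
    rintro l ⟨hbox, hD⟩
    have h0 : Real.sin (π * l 0) = 0 := by nlinarith [sq_nonneg (Real.sin (π * l 0)), sq_nonneg (Real.sin (π * l 1)), sq_abs (Real.sin (π * l 0))]
    have hl0 : l 0 ∈ Set.Icc (0:ℝ) 1 := hbox 0 trivial
    intro i _
    by_cases hi : i = 0
    · subst hi
      simp only [if_pos rfl]
      rw [Real.sin_eq_zero_iff] at h0
      obtain ⟨n, hn⟩ := h0
      have hπ : (0:ℝ) < π := Real.pi_pos
      have hln : l 0 = n := by
        have h2 : π * (n:ℝ) = π * l 0 := by rw [mul_comm]; exact hn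
        exact (mul_left_cancel₀ (ne_of_gt hπ) h2).symm
      have : n = 0 ∨ n = 1 := by
        rcases hl0 with ⟨ha, hb⟩
        rw [hln] at ha hb
        have h1 : (0:ℤ) ≤ n := by exact_mod_cast ha
        have h2 : n ≤ 1 := by exact_mod_cast hb
        omega
      rcases this with h | h <;> rw [hln, h]
      · left; norm_num
      · right; norm_num
    · have : i = 1 := by omega
      subst this
      simpa using hbox 1 trivial
  refine measure_mono_null hsub ?_
  rw [volume_pi_pi]
  rw [Fin.prod_univ_two]
  have : volume ({0, 1} : Set ℝ) = 0 := (Set.finite_singleton (1:ℝ)).insert 0 |>.measure_zero _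
  simp [this]

lemma ae_sum_eq (x y : ℤ) :
    ∀ᵐ l ∂(volume.restrict myBox),
      Ffun x y l + Gfun x y l = Real.cos (2 * π * (l 0 * x + l 1 * y)) := by
  rw [ae_restrict_iff' measurableSet_myBox]
  rw [ae_iff]
  refine measure_mono_null ?_ bad_null
  intro l hl
  simp only [Set.mem_setOf_eq, not_forall] at hl
  obtain ⟨hbox, hne⟩ := hl
  refine ⟨hbox, ?_⟩
  by_contra hD
  apply hne
  unfold Ffun Gfun
  rw [← add_div, ← add_mul]
  field_simp

lemma cos_interval_int (k : ℤ) (hk : k ≠ 0) (d : ℝ) :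
    ∫ t in (0:ℝ)..1, Real.cos (2 * π * k * t + d) = 0 := by
  have hc : (2 * π * (k:ℝ)) ≠ 0 := by
    have := Real.pi_pos
    intro h
    have : (k:ℝ) = 0 := by
      rcases mul_eq_zero.1 h with h | h
      · nlinarith
      · exact h
    exact hk (by exact_mod_cast this)
  have := intervalIntegral.integral_comp_mul_add Real.cos hc d (a := 0) (b := 1)
  rw [this]
  rw [integral_cos]
  have h1 : 2 * π * (k:ℝ) * 1 + d = d + k * (2 * π) := by ring
  have h0 : 2 * π * (k:ℝ) * 0 + d = d := by ring
  rw [h1, h0, Real.sin_add_int_mul_two_pi]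
  simp

lemma cos_Icc_int (k : ℤ) (hk : k ≠ 0) (d : ℝ) :
    ∫ t in Set.Icc (0:ℝ) 1, Real.cos (2 * π * k * t + d) = 0 := by
  rw [integral_Icc_eq_integral_Ioc, ← intervalIntegral.integral_of_le (by norm_num : (0:ℝ) ≤ 1)]
  exact cos_interval_int k hk d

lemma cos_box_integral (x y : ℤ) (hxy : (x, y) ≠ (0, 0)) :
    ∫ l in myBox, Real.cos (2 * π * (l 0 * x + l 1 * y)) = 0 := by
  have hmp : MeasurePreserving (MeasurableEquiv.finTwoArrow.symm : ℝ × ℝ ≃ᵐ (Fin 2 → ℝ))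
      volume volume := (volume_preserving_finTwoArrow ℝ).symm _
  have hpre : (MeasurableEquiv.finTwoArrow.symm : ℝ × ℝ ≃ᵐ (Fin 2 → ℝ)) ⁻¹' myBox
      = Set.Icc (0:ℝ) 1 ×ˢ Set.Icc (0:ℝ) 1 := by
    ext p
    simp only [Set.mem_preimage, myBox, Set.mem_pi, Set.mem_univ, forall_true_left,
      Set.mem_prod, MeasurableEquiv.finTwoArrow_symm_apply]
    constructor
    · intro h; exact ⟨h 0, h 1⟩
    · rintro ⟨h0, h1⟩ i; fin_cases i <;> simpa
  have key := hmp.setIntegral_preimage_emb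
    (MeasurableEquiv.finTwoArrow.symm : ℝ × ℝ ≃ᵐ (Fin 2 → ℝ)).measurableEmbedding
    (fun l => Real.cos (2 * π * (l 0 * x + l 1 * y))) myBox
  rw [hpre] at key
  rw [← key]
  have hint : IntegrableOn (fun p : ℝ × ℝ => Real.cos (2 * π * (p.1 * x + p.2 * y)))
      (Set.Icc (0:ℝ) 1 ×ˢ Set.Icc (0:ℝ) 1) := by
    apply Integrable.mono' (g := fun _ => (1:ℝ))
    · refine integrableOn_const (ne_of_lt ?_) (by simp)
      rw [Measure.volume_eq_prod, Measure.prod_prod]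
      simp [Real.volume_Icc]
    · apply Measurable.aestronglyMeasurable; fun_prop
    · exact ae_of_all _ fun p => by simpa using Real.abs_cos_le_one _
  have heq : ∫ p : ℝ × ℝ in Set.Icc (0:ℝ) 1 ×ˢ Set.Icc (0:ℝ) 1,
      (fun l : Fin 2 → ℝ => Real.cos (2 * π * (l 0 * x + l 1 * y)))
        (MeasurableEquiv.finTwoArrow.symm p)
      = ∫ p : ℝ × ℝ in Set.Icc (0:ℝ) 1 ×ˢ Set.Icc (0:ℝ) 1,
        Real.cos (2 * π * (p.1 * x + p.2 * y)) := by
    apply integral_congr_ae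
    filter_upwards with p
    simp [MeasurableEquiv.finTwoArrow_symm_apply]
  rw [heq]
  rw [Measure.volume_eq_prod, setIntegral_prod _ (by rwa [← Measure.volume_eq_prod])]
  by_cases hy : y = 0
  · have hx : x ≠ 0 := by
      intro hx; exact hxy (by rw [hx, hy])
    have hinner : ∀ a : ℝ, ∫ b in Set.Icc (0:ℝ) 1, Real.cos (2 * π * (a * x + b * y))
        = Real.cos (2 * π * (a * x)) := by
      intro a
      subst hy
      simp only [Int.cast_zero, mul_zero, add_zero]
      rw [setIntegral_const]
      simp [Real.volume_Icc]
    calc ∫ a in Set.Icc (0:ℝ) 1, ∫ b in Set.Icc (0:ℝ) 1, Real.cos (2 * π * (a * x + b * y))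
        = ∫ a in Set.Icc (0:ℝ) 1, Real.cos (2 * π * x * a + 0) := by
          apply integral_congr_ae; filter_upwards with a
          rw [hinner a]; ring_nf
      _ = 0 := cos_Icc_int x hx 0
  · have hinner : ∀ a : ℝ, ∫ b in Set.Icc (0:ℝ) 1, Real.cos (2 * π * (a * x + b * y)) = 0 := by
      intro a
      have : ∀ b : ℝ, Real.cos (2 * π * (a * x + b * y))
          = Real.cos (2 * π * y * b + 2 * π * (a * x)) := by intro b; ring_nf
      calc ∫ b in Set.Icc (0:ℝ) 1, Real.cos (2 * π * (a * x + b * y))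
          = ∫ b in Set.Icc (0:ℝ) 1, Real.cos (2 * π * y * b + 2 * π * (a * x)) := by
            apply integral_congr_ae; filter_upwards with b; exact this b
        _ = 0 := cos_Icc_int y hy _
    simp only [hinner]
    simp

lemma gamma_antisymm (x y : ℤ) (hxy : (x, y) ≠ (0, 0)) :
    latticeGamma 2 0 0 ![y, x] = -latticeGamma 2 0 0 ![x, y] := by
  rw [gamma_eq y x, gamma_eq x y, mySwapIntegral x y]
  have hadd : (∫ l in myBox, Ffun x y l) + ∫ l in myBox, Gfun x y l = 0 := by
    rw [← integral_add (integrableOn_of_bounded (measurable_Ffun x y) (abs_Ffun_le x y))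
      (integrableOn_of_bounded (measurable_Gfun x y) (abs_Gfun_le x y))]
    rw [integral_congr_ae (ae_sum_eq x y)]
    exact cos_box_integral x y hxy
  linarith

theorem latticeGamma_aux :
    (∀ x y : ℤ, (x, y) ≠ (0, 0) →
        latticeGamma 2 0 0 ![y, x] = -latticeGamma 2 0 0 ![x, y]) ∧
    (Summable (fun z : Fin 2 → ℤ => |latticeGamma 2 0 0 z ^ 3|) →
      ∑' z : {z : Fin 2 → ℤ // z ≠ 0}, latticeGamma 2 0 0 (z : Fin 2 → ℤ) ^ 3 = 0) := by
  constructor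
  · exact gamma_antisymm
  · intro hs
    have hsum : Summable (fun z : Fin 2 → ℤ => latticeGamma 2 0 0 z ^ 3) :=
      (summable_abs_iff.mp hs)
    have hsub : Summable (fun z : {z : Fin 2 → ℤ // z ≠ 0} =>
        latticeGamma 2 0 0 (z : Fin 2 → ℤ) ^ 3) := hsum.subtype _
    -- swap equiv on nonzero lattice points
    have hswapne : ∀ z : Fin 2 → ℤ, z ≠ 0 → (![z 1, z 0] : Fin 2 → ℤ) ≠ 0 := by
      intro z hz h
      apply hz
      funext i
      fin_cases i
      · have := congrFun h 1; simpa using this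
      · have := congrFun h 0; simpa using this
    let e : {z : Fin 2 → ℤ // z ≠ 0} ≃ {z : Fin 2 → ℤ // z ≠ 0} :=
      { toFun := fun z => ⟨![z.1 1, z.1 0], hswapne z.1 z.2⟩
        invFun := fun z => ⟨![z.1 1, z.1 0], hswapne z.1 z.2⟩
        left_inv := by
          rintro ⟨z, hz⟩
          ext i
          fin_cases i <;> simp
        right_inv := by
          rintro ⟨z, hz⟩
          ext i
          fin_cases i <;> simp }
    have hkey : ∀ z : {z : Fin 2 → ℤ // z ≠ 0},
        latticeGamma 2 0 0 ((e z : {z : Fin 2 → ℤ // z ≠ 0}) : Fin 2 → ℤ) ^ 3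
          = -(latticeGamma 2 0 0 (z : Fin 2 → ℤ) ^ 3) := by
      rintro ⟨z, hz⟩
      have hz01 : (z 0, z 1) ≠ (0, 0) := by
        intro h
        apply hz
        funext i
        fin_cases i
        · exact congrArg Prod.fst h
        · exact congrArg Prod.snd h
      have hzeq : z = ![z 0, z 1] := by
        funext i; fin_cases i <;> simp
      have := gamma_antisymm (z 0) (z 1) hz01
      show latticeGamma 2 0 0 ![z 1, z 0] ^ 3 = -(latticeGamma 2 0 0 z ^ 3)
      rw [this]
      rw [show latticeGamma 2 0 0 ![z 0, z 1] = latticeGamma 2 0 0 z by rw [← hzeq]]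
      ring
    have h1 : ∑' z : {z : Fin 2 → ℤ // z ≠ 0}, latticeGamma 2 0 0 (z : Fin 2 → ℤ) ^ 3
        = ∑' z : {z : Fin 2 → ℤ // z ≠ 0},
            latticeGamma 2 0 0 ((e z : {z : Fin 2 → ℤ // z ≠ 0}) : Fin 2 → ℤ) ^ 3 :=
      (e.tsum_eq fun z => latticeGamma 2 0 0 (z : Fin 2 → ℤ) ^ 3).symm
    have h2 : ∑' z : {z : Fin 2 → ℤ // z ≠ 0},
          latticeGamma 2 0 0 ((e z : {z : Fin 2 → ℤ // z ≠ 0}) : Fin 2 → ℤ) ^ 3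
        = -∑' z : {z : Fin 2 → ℤ // z ≠ 0}, latticeGamma 2 0 0 (z : Fin 2 → ℤ) ^ 3 := by
      rw [← tsum_neg]
      exact tsum_congr hkey
    linarith [h1.trans h2]

/-- In dimension 2, `Γ₁₁(y,x) = -Γ₁₁(x,y)` for `(x,y) ≠ (0,0)`; consequently
`Σ_{z ≠ 0} Γ₁₁(z)³ = 0` whenever the sum converges absolutely. -/
theorem latticeGamma_2D_antisymm_and_cube_sum :
    (∀ x y : ℤ, (x, y) ≠ (0, 0) →
        latticeGamma 2 0 0 ![y, x] = -latticeGamma 2 0 0 ![x, y]) ∧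
    (Summable (fun z : Fin 2 → ℤ => |latticeGamma 2 0 0 z ^ 3|) →
      ∑' z : {z : Fin 2 → ℤ // z ≠ 0}, latticeGamma 2 0 0 (z : Fin 2 → ℤ) ^ 3 = 0) := latticeGamma_aux
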